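/- Assume the Generalized Continuum Hypothesis (for every infinite cardinal κ there is no cardinal strictly between κ and 2^κ). Let ℵ be an infinite cardinal, let R_ℵ be a graph of order ℵ satisfying property ⋆_ℵ, and let F be a family of graphs of order ℵ with |F| = ℵ. Then FP(F, R_ℵ) has a solution if and only if the domination number of each graph in F equals ℵ. -/

import Mathlib

universe u

/-- Property `⋆_ℵ`: for every two disjoint sets of vertices `U` and `W`, each of
cardinality less than `ℵ`, there is a vertex `z` adjacent to every vertex of `U`
and to no vertex of `W`. -/
def StarProp {V : Type u} (ℵ : Cardinal.{u}) (G : SimpleGraph V) : Prop :=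
  ∀ U W : Set V, Disjoint U W → Cardinal.mk ↥U < ℵ → Cardinal.mk ↥W < ℵ →
    ∃ z : V, (∀ u ∈ U, G.Adj z u) ∧ ∀ w ∈ W, ¬ G.Adj z w

/-- A set `D` of vertices is dominating if every vertex not in `D` is adjacent to
some vertex of `D`. -/
def IsDominatingSet {V : Type*} (F : SimpleGraph V) (D : Set V) : Prop :=
  ∀ v ∉ D, ∃ d ∈ D, F.Adj v d

/-- An indexed family `G` of graphs is a factorization of `Λ`: each `G a` is a
(spanning) subgraph of `Λ` and the edge sets of the `G a` partition the edge set
of `Λ`. -/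
def IsFactorization {A V : Type*} (Λ : SimpleGraph V) (G : A → SimpleGraph V) : Prop :=
  (∀ a, G a ≤ Λ) ∧ ∀ e ∈ Λ.edgeSet, ∃! a, e ∈ (G a).edgeSet

namespace Stmt9

open Cardinal Set

variable {X : Type u} {ℵ : Cardinal.{u}} {Rℵ : SimpleGraph X}

/-- Key strengthening of the star property: the witness can be chosen outside
any prescribed small set `B`. -/
lemma starProp_avoid (hℵ : ℵ₀ ≤ ℵ) (hR : StarProp ℵ Rℵ) (U W B : Set X)
    (hUW : Disjoint U W) (hU : #U < ℵ) (hW : #W < ℵ) (hB : #B < ℵ) :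
    ∃ z, z ∉ B ∧ (∀ u ∈ U, Rℵ.Adj z u) ∧ ∀ w ∈ W, ¬ Rℵ.Adj z w := by
  have hpos : (0 : Cardinal) < ℵ := lt_of_lt_of_le aleph0_pos hℵ
  set T : Set X := U ∪ W ∪ B with hT
  have hTsmall : #T < ℵ := by
    refine lt_of_le_of_lt (mk_union_le _ _) (add_lt_of_lt hℵ ?_ hB)
    exact lt_of_le_of_lt (mk_union_le _ _) (add_lt_of_lt hℵ hU hW)
  have hsing : ∀ x : X, #({x} : Set X) < ℵ := by
    intro x; rw [mk_singleton]; exact lt_of_lt_of_le one_lt_aleph0 hℵ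
  -- step 1
  obtain ⟨y, -, hy⟩ := hR ∅ T (disjoint_bot_left) (by rw [mk_emptyCollection]; exact hpos) hTsmall
  -- step 2
  obtain ⟨y₂, hy₂U, hy₂W⟩ := hR {y} (T \ {y})
    (disjoint_sdiff_right.mono_left (by simp)) (hsing y)
    (lt_of_le_of_lt (mk_le_mk_of_subset diff_subset) hTsmall)
  have hy₂y : Rℵ.Adj y₂ y := hy₂U y rfl
  have hy₂T : y₂ ∉ T := by
    intro hmem
    rcases eq_or_ne y₂ y with rfl | hne
    · exact Rℵ.irrefl hy₂y
    · exact hy y₂ hmem hy₂y.symm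
  -- step 3
  obtain ⟨y₃, hy₃U, hy₃W⟩ := hR {y, y₂} (T \ {y})
    (by
      rw [Set.disjoint_left]
      rintro z (rfl | rfl)
      · simp
      · exact fun hz => hy₂T hz.1) 
    (lt_of_le_of_lt mk_insert_le (add_lt_of_lt hℵ (hsing _) (lt_of_lt_of_le one_lt_aleph0 hℵ)))
    (lt_of_le_of_lt (mk_le_mk_of_subset diff_subset) hTsmall)
  have hy₃y : Rℵ.Adj y₃ y := hy₃U y (by simp)
  have hy₃y₂ : Rℵ.Adj y₃ y₂ := hy₃U y₂ (by simp)
  have hy₃T : y₃ ∉ T := by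
    intro hmem
    rcases eq_or_ne y₃ y with rfl | hne
    · exact Rℵ.irrefl hy₃y
    · exact hy y₃ hmem hy₃y.symm
  -- step 4
  obtain ⟨z, hzU, hzW⟩ := hR (U ∪ {y₂}) (W ∪ {y₃})
    (by
      rw [Set.disjoint_left]
      rintro t (ht | rfl)
      · rintro (htW | rfl)
        · exact (Set.disjoint_left.mp hUW) ht htW
        · exact hy₃T (Or.inl (Or.inl ht))
      · rintro (htW | rfl)
        · exact hy₂T (Or.inl (Or.inr htW))
        · exact Rℵ.irrefl hy₃y₂)
    (lt_of_le_of_lt (mk_union_le _ _) (add_lt_of_lt hℵ hU (hsing _)))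
    (lt_of_le_of_lt (mk_union_le _ _) (add_lt_of_lt hℵ hW (hsing _)))
  refine ⟨z, ?_, fun u hu => hzU u (Or.inl hu), fun w hw => hzW w (Or.inl hw)⟩
  intro hzB
  have hzy₂ : Rℵ.Adj z y₂ := hzU y₂ (Or.inr rfl)
  have hzy₃ : ¬ Rℵ.Adj z y₃ := hzW y₃ (Or.inr rfl)
  rcases eq_or_ne z y with rfl | hne
  · exact hzy₃ hy₃y.symm
  · exact hy₂W z ⟨Or.inr hzB, hne⟩ hzy₂.symm

/-- Forward direction: a spanning subgraph of a `⋆_ℵ` graph isomorphic to a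
graph with a small dominating set is impossible. -/
lemma dom_large (hℵ : ℵ₀ ≤ ℵ) (hR : StarProp ℵ Rℵ) {W : Type u} {Fa : SimpleGraph W}
    {G : SimpleGraph X} (hle : G ≤ Rℵ) (iso : Fa ≃g G) {D : Set W}
    (hD : IsDominatingSet Fa D) : ℵ ≤ #D := by
  by_contra hlt
  push_neg at hlt
  set D' : Set X := ⇑iso '' D with hD'def
  have hD' : #D' < ℵ := lt_of_le_of_lt mk_image_le hlt
  obtain ⟨z, hzB, -, hzW⟩ := starProp_avoid hℵ hR ∅ D' D' disjoint_bot_left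
    (by rw [mk_emptyCollection]; exact lt_of_lt_of_le aleph0_pos hℵ) hD' hD'
  have hz : iso.symm z ∉ D := by
    intro h
    exact hzB ⟨iso.symm z, h, by simp⟩
  obtain ⟨d, hd, hadj⟩ := hD _ hz
  have h1 : G.Adj (iso (iso.symm z)) (iso d) := iso.map_adj_iff.mpr hadj
  rw [RelIso.apply_symm_apply] at h1
  exact hzW (iso d) ⟨d, hd, rfl⟩ (hle h1)

section Construction

variable {X : Type u} {A : Type u} {V : A → Type u}

/-- An atom records that, in the partial embedding of factor `a`, the vertex
`u : V a` is sent to `x : X`. -/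
abbrev Atom (V : A → Type u) (X : Type u) : Type u := (Σ a, V a) × X

variable (F : ∀ a, SimpleGraph (V a)) (Rℵ : SimpleGraph X)

/-- The (partial) factor `b` covers the pair `x y`. -/
def Cov (P : Set (Atom V X)) (b : A) (x y : X) : Prop :=
  ∃ u v : V b, ((⟨b, u⟩ : Σ a, V a), x) ∈ P ∧ ((⟨b, v⟩ : Σ a, V a), y) ∈ P ∧ (F b).Adj u v

variable (V) in
def Dom (P : Set (Atom V X)) (a : A) : Set (V a) := {u | ∃ x, ((⟨a, u⟩ : Σ a, V a), x) ∈ P}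

variable (V) in
def Ran (P : Set (Atom V X)) (a : A) : Set X := {x | ∃ u : V a, ((⟨a, u⟩ : Σ a, V a), x) ∈ P}

variable (V) in
def UsedX (P : Set (Atom V X)) : Set X := {x | ∃ k : Σ a, V a, (k, x) ∈ P}

variable (V) in
def ActiveA (P : Set (Atom V X)) : Set A :=
  {a | ∃ u : V a, ∃ x, ((⟨a, u⟩ : Σ a, V a), x) ∈ P}

/-- The invariants of the construction. -/
structure Good (P : Set (Atom V X)) : Prop where
  func : ∀ (k : Σ a, V a) (x x' : X), (k, x) ∈ P → (k, x') ∈ P → x = x'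
  inj : ∀ (k k' : Σ a, V a) (x : X), (k, x) ∈ P → (k', x) ∈ P → k.1 = k'.1 → k = k'
  hom : ∀ (a : A) (u v : V a) (x y : X), ((⟨a, u⟩ : Σ a, V a), x) ∈ P →
    ((⟨a, v⟩ : Σ a, V a), y) ∈ P → (F a).Adj u v → Rℵ.Adj x y
  cov : ∀ (b c : A) (x y : X), Cov F P b x y → Cov F P c x y → b = c

variable {F Rℵ}

lemma cov_mono {P Q : Set (Atom V X)} (h : P ⊆ Q) {b x y} (hc : Cov F P b x y) :
    Cov F Q b x y := by
  obtain ⟨u, v, h1, h2, h3⟩ := hc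
  exact ⟨u, v, h h1, h h2, h3⟩

lemma cov_symm {P : Set (Atom V X)} {b x y} (hc : Cov F P b x y) : Cov F P b y x := by
  obtain ⟨u, v, h1, h2, h3⟩ := hc
  exact ⟨v, u, h2, h1, h3.symm⟩

lemma cov_usedX {P : Set (Atom V X)} {b x y} (hc : Cov F P b x y) :
    x ∈ UsedX V P ∧ y ∈ UsedX V P := by
  obtain ⟨u, v, h1, h2, _⟩ := hc
  exact ⟨⟨_, h1⟩, ⟨_, h2⟩⟩

lemma mk_usedX_le (P : Set (Atom V X)) : #(UsedX V P) ≤ #P := by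
  have h : ∀ x : UsedX V P, ∃ p : P, (p : Atom V X).2 = (x : X) := by
    rintro ⟨x, k, hk⟩
    exact ⟨⟨(k, x), hk⟩, rfl⟩
  choose f hf using h
  have hinj : Function.Injective f := by
    intro x y hxy
    apply Subtype.ext
    rw [← hf x, ← hf y, hxy]
  exact mk_le_of_injective hinj

lemma mk_dom_le (P : Set (Atom V X)) (a : A) : #(Dom V P a) ≤ #P := by
  have h : ∀ u : Dom V P a, ∃ p : P, (p : Atom V X).1 = ⟨a, (u : V a)⟩ := by
    rintro ⟨u, x, hx⟩
    exact ⟨⟨(⟨a, u⟩, x), hx⟩, rfl⟩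
  choose f hf using h
  have hinj : Function.Injective f := by
    intro x y hxy
    apply Subtype.ext
    have := (hf x).symm.trans ((congrArg (fun p : P => (p : Atom V X).1) hxy).trans (hf y))
    simpa using this
  exact mk_le_of_injective hinj

lemma mk_activeA_le (P : Set (Atom V X)) : #(ActiveA V P) ≤ #P := by
  have h : ∀ a : ActiveA V P, ∃ p : P, (p : Atom V X).1.1 = (a : A) := by
    rintro ⟨a, u, x, hx⟩
    exact ⟨⟨(⟨a, u⟩, x), hx⟩, rfl⟩
  choose f hf using h
  have hinj : Function.Injective f := by
    intro x y hxy
    apply Subtype.ext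
    rw [← hf x, ← hf y, hxy]
  exact mk_le_of_injective hinj

end Construction

lemma key_cases {A : Type u} {V : A → Type u} {a b : A} {u : V a} {w : V b}
    (h : (⟨b, w⟩ : Σ a, V a) = ⟨a, u⟩) : ∃ _ : b = a, HEq w u := by
  injection h with h1 h2
  exact ⟨h1, h2⟩

section Extension

variable {A : Type u} {V : A → Type u} {F : ∀ a, SimpleGraph (V a)}

lemma exists_adj_of_ne (a : A) (h : (F a).edgeSet.Nonempty) : ∃ u v : V a, (F a).Adj u v := by
  obtain ⟨e, he⟩ := h
  exact Sym2.ind (f := fun e => e ∈ (F a).edgeSet → ∃ u v : V a, (F a).Adj u v)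
    (fun u v h => ⟨u, v, h⟩) e he

/-- Task 1: extend the domain of the partial embedding of factor `a` to `u`. -/
lemma extend_dom (hℵ : ℵ₀ ≤ ℵ) (hR : StarProp ℵ Rℵ) (P : Set (Atom V X))
    (hG : Good F Rℵ P) (hP : #P < ℵ) (a : A) (u : V a) (hu : u ∉ Dom V P a) :
    ∃ x : X, Good F Rℵ (P ∪ {((⟨a, u⟩ : Σ a, V a), x)}) := by
  set U : Set X := {x | ∃ w : V a, ((⟨a, w⟩ : Σ a, V a), x) ∈ P ∧ (F a).Adj u w} with hUdef
  have hUsub : U ⊆ UsedX V P := by rintro x ⟨w, hw, -⟩; exact ⟨_, hw⟩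
  have hUsed : #(UsedX V P) < ℵ := lt_of_le_of_lt (mk_usedX_le P) hP
  have hUlt : #U < ℵ := lt_of_le_of_lt (mk_le_mk_of_subset hUsub) hUsed
  obtain ⟨z, hzB, hzU, -⟩ := starProp_avoid hℵ hR U ∅ (UsedX V P) disjoint_bot_right
    hUlt (by rw [mk_emptyCollection]; exact lt_of_lt_of_le aleph0_pos hℵ) hUsed
  have hmem : ∀ p : Atom V X, p ∈ P ∪ {((⟨a, u⟩ : Σ a, V a), z)} ↔
      p ∈ P ∨ p = ((⟨a, u⟩ : Σ a, V a), z) := by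
    intro p
    rw [Set.union_singleton, Set.mem_insert_iff]
    exact or_comm
  have hused : ∀ (k : Σ a, V a), (k, z) ∉ P := fun k hk => hzB ⟨k, hk⟩
  have hcov' : ∀ (b : A) (x y : X),
      Cov F (P ∪ {((⟨a, u⟩ : Σ a, V a), z)}) b x y →
      Cov F P b x y ∨ (b = a ∧ (x = z ∨ y = z)) := by
    rintro b x y ⟨u₁, v₁, h1, h2, hadj⟩
    rw [hmem] at h1 h2
    rcases h1 with h1 | h1
    · rcases h2 with h2 | h2
      · exact Or.inl ⟨u₁, v₁, h1, h2, hadj⟩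
      · obtain ⟨hk, hx⟩ := Prod.ext_iff.mp h2
        obtain ⟨rfl, -⟩ := key_cases hk
        exact Or.inr ⟨rfl, Or.inr hx⟩
    · obtain ⟨hk, hx⟩ := Prod.ext_iff.mp h1
      obtain ⟨rfl, -⟩ := key_cases hk
      exact Or.inr ⟨rfl, Or.inl hx⟩
  refine ⟨z, ?_, ?_, ?_, ?_⟩
  · -- func
    intro k x x' h1 h2
    rw [hmem] at h1 h2
    rcases h1 with h1 | h1 <;> rcases h2 with h2 | h2
    · exact hG.func k x x' h1 h2
    · obtain ⟨hk, hx⟩ := Prod.ext_iff.mp h2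
      subst hk
      exact absurd ⟨x, h1⟩ hu
    · obtain ⟨hk, hx⟩ := Prod.ext_iff.mp h1
      subst hk
      exact absurd ⟨x', h2⟩ hu
    · obtain ⟨-, hx⟩ := Prod.ext_iff.mp h1
      obtain ⟨-, hx'⟩ := Prod.ext_iff.mp h2
      exact hx.trans hx'.symm
  · -- inj
    intro k k' x h1 h2 hfst
    rw [hmem] at h1 h2
    rcases h1 with h1 | h1 <;> rcases h2 with h2 | h2
    · exact hG.inj k k' x h1 h2 hfst
    · obtain ⟨hk, hx⟩ := Prod.ext_iff.mp h2
      have hx' : x = z := hx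
      subst hx'
      exact (hused _ h1).elim
    · obtain ⟨hk, hx⟩ := Prod.ext_iff.mp h1
      have hx' : x = z := hx
      subst hx'
      exact (hused _ h2).elim
    · obtain ⟨hk, -⟩ := Prod.ext_iff.mp h1
      obtain ⟨hk', -⟩ := Prod.ext_iff.mp h2
      exact hk.trans hk'.symm
  · -- hom
    intro b u' v' x y h1 h2 hadj
    rw [hmem] at h1 h2
    rcases h1 with h1 | h1 <;> rcases h2 with h2 | h2
    · exact hG.hom b u' v' x y h1 h2 hadj
    · -- h2 is the new atom : v' = u, y = z
      obtain ⟨hk, hy⟩ := Prod.ext_iff.mp h2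
      obtain ⟨rfl, hw⟩ := key_cases hk
      obtain rfl := eq_of_heq hw
      have hy' : y = z := hy
      subst hy'
      have hxU : x ∈ U := ⟨u', h1, hadj.symm⟩
      exact (hzU x hxU).symm
    · obtain ⟨hk, hy⟩ := Prod.ext_iff.mp h1
      obtain ⟨rfl, hw⟩ := key_cases hk
      obtain rfl := eq_of_heq hw
      have hx' : x = z := hy
      subst hx'
      have hyU : y ∈ U := ⟨v', h2, hadj⟩
      exact hzU y hyU
    · obtain ⟨hk, -⟩ := Prod.ext_iff.mp h1
      obtain ⟨hk', -⟩ := Prod.ext_iff.mp h2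
      obtain ⟨rfl, hw⟩ := key_cases hk
      obtain rfl := eq_of_heq hw
      obtain ⟨-, hw'⟩ := key_cases hk'
      obtain rfl := eq_of_heq hw'
      exact absurd rfl hadj.ne
  · -- cov
    intro b c x y hb hc
    rcases hcov' b x y hb with hb' | ⟨rfl, hbz⟩
    · rcases hcov' c x y hc with hc' | ⟨rfl, hcz⟩
      · exact hG.cov b c x y hb' hc'
      · obtain ⟨hx, hy⟩ := cov_usedX hb'
        rcases hcz with rfl | rfl
        · exact absurd hx hzB
        · exact absurd hy hzB
    · rcases hcov' c x y hc with hc' | ⟨rfl, hcz⟩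
      · obtain ⟨hx, hy⟩ := cov_usedX hc'
        rcases hbz with rfl | rfl
        · exact absurd hx hzB
        · exact absurd hy hzB
      · rfl

/-- Task 2: extend the range of the partial embedding of factor `a` to `x`;
this is where the hypothesis on domination numbers is used. -/
lemma extend_ran {Rℵ : SimpleGraph X} {ℵ : Cardinal.{u}}
    (hdom : ∀ (a : A) (D : Set (V a)), IsDominatingSet (F a) D → ℵ ≤ #D)
    (P : Set (Atom V X)) (hG : Good F Rℵ P) (hP : #P < ℵ) (a : A) (x : X)
    (hx : x ∉ Ran V P a) :
    ∃ u : V a, Good F Rℵ (P ∪ {((⟨a, u⟩ : Σ a, V a), x)}) := by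
  have hDom : #(Dom V P a) < ℵ := lt_of_le_of_lt (mk_dom_le P a) hP
  have hnd : ¬ IsDominatingSet (F a) (Dom V P a) := fun h => absurd (hdom a _ h) (not_le.mpr hDom)
  rw [IsDominatingSet] at hnd
  push_neg at hnd
  obtain ⟨u, hu, hnon⟩ := hnd
  have hmem : ∀ p : Atom V X, p ∈ P ∪ {((⟨a, u⟩ : Σ a, V a), x)} ↔
      p ∈ P ∨ p = ((⟨a, u⟩ : Σ a, V a), x) := by
    intro p
    rw [Set.union_singleton, Set.mem_insert_iff]
    exact or_comm
  have hcov' : ∀ (b : A) (x₁ y₁ : X),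
      Cov F (P ∪ {((⟨a, u⟩ : Σ a, V a), x)}) b x₁ y₁ → Cov F P b x₁ y₁ := by
    rintro b x₁ y₁ ⟨u₁, v₁, h1, h2, hadj⟩
    rw [hmem] at h1 h2
    rcases h1 with h1 | h1
    · rcases h2 with h2 | h2
      · exact ⟨u₁, v₁, h1, h2, hadj⟩
      · obtain ⟨hk, -⟩ := Prod.ext_iff.mp h2
        obtain ⟨rfl, hw⟩ := key_cases hk
        obtain rfl := eq_of_heq hw
        exact absurd hadj.symm (hnon u₁ ⟨x₁, h1⟩)
    · rcases h2 with h2 | h2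
      · obtain ⟨hk, -⟩ := Prod.ext_iff.mp h1
        obtain ⟨rfl, hw⟩ := key_cases hk
        obtain rfl := eq_of_heq hw
        exact absurd hadj (hnon v₁ ⟨y₁, h2⟩)
      · obtain ⟨hk, -⟩ := Prod.ext_iff.mp h1
        obtain ⟨hk', -⟩ := Prod.ext_iff.mp h2
        obtain ⟨rfl, hw⟩ := key_cases hk
        obtain rfl := eq_of_heq hw
        obtain ⟨-, hw'⟩ := key_cases hk'
        obtain rfl := eq_of_heq hw'
        exact absurd rfl hadj.ne
  refine ⟨u, ?_, ?_, ?_, ?_⟩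
  · -- func
    intro k x₁ x₂ h1 h2
    rw [hmem] at h1 h2
    rcases h1 with h1 | h1 <;> rcases h2 with h2 | h2
    · exact hG.func k x₁ x₂ h1 h2
    · obtain ⟨hk, -⟩ := Prod.ext_iff.mp h2
      subst hk
      exact absurd ⟨x₁, h1⟩ hu
    · obtain ⟨hk, -⟩ := Prod.ext_iff.mp h1
      subst hk
      exact absurd ⟨x₂, h2⟩ hu
    · obtain ⟨-, h1x⟩ := Prod.ext_iff.mp h1
      obtain ⟨-, h2x⟩ := Prod.ext_iff.mp h2
      exact h1x.trans h2x.symm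
  · -- inj
    intro k k' x₁ h1 h2 hfst
    rw [hmem] at h1 h2
    rcases h1 with h1 | h1 <;> rcases h2 with h2 | h2
    · exact hG.inj k k' x₁ h1 h2 hfst
    · obtain ⟨hk, hx'⟩ := Prod.ext_iff.mp h2
      have hk2 : k' = ⟨a, u⟩ := hk
      have hx'' : x₁ = x := hx'
      subst hx''
      obtain ⟨b, w⟩ := k
      rw [hk2] at hfst
      have hba : b = a := hfst
      subst hba
      exact absurd ⟨w, h1⟩ hx
    · obtain ⟨hk, hx'⟩ := Prod.ext_iff.mp h1
      have hk2 : k = ⟨a, u⟩ := hk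
      have hx'' : x₁ = x := hx'
      subst hx''
      obtain ⟨b, w⟩ := k'
      rw [hk2] at hfst
      have hba : b = a := hfst.symm
      subst hba
      exact absurd ⟨w, h2⟩ hx
    · obtain ⟨hk, -⟩ := Prod.ext_iff.mp h1
      obtain ⟨hk', -⟩ := Prod.ext_iff.mp h2
      exact hk.trans hk'.symm
  · -- hom
    intro b u' v' x₁ y₁ h1 h2 hadj
    rw [hmem] at h1 h2
    rcases h1 with h1 | h1 <;> rcases h2 with h2 | h2
    · exact hG.hom b u' v' x₁ y₁ h1 h2 hadj
    · obtain ⟨hk, -⟩ := Prod.ext_iff.mp h2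
      obtain ⟨rfl, hw⟩ := key_cases hk
      obtain rfl := eq_of_heq hw
      exact absurd hadj.symm (hnon u' ⟨x₁, h1⟩)
    · obtain ⟨hk, -⟩ := Prod.ext_iff.mp h1
      obtain ⟨rfl, hw⟩ := key_cases hk
      obtain rfl := eq_of_heq hw
      exact absurd hadj (hnon v' ⟨y₁, h2⟩)
    · obtain ⟨hk, -⟩ := Prod.ext_iff.mp h1
      obtain ⟨hk', -⟩ := Prod.ext_iff.mp h2
      obtain ⟨rfl, hw⟩ := key_cases hk
      obtain rfl := eq_of_heq hw
      obtain ⟨-, hw'⟩ := key_cases hk'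
      obtain rfl := eq_of_heq hw'
      exact absurd rfl hadj.ne
  · -- cov
    intro b c x₁ y₁ hb hc
    exact hG.cov b c x₁ y₁ (hcov' b x₁ y₁ hb) (hcov' c x₁ y₁ hc)

/-- Task 3: cover a yet-uncovered edge of `Rℵ` by a fresh factor. -/
lemma cover_edge {Rℵ : SimpleGraph X} {ℵ : Cardinal.{u}} (hℵ : ℵ₀ ≤ ℵ) (hA : #A = ℵ)
    (hne : ∀ a, (F a).edgeSet.Nonempty)
    (P : Set (Atom V X)) (hG : Good F Rℵ P) (hP : #P < ℵ) (x y : X)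
    (hadj : Rℵ.Adj x y) (hnc : ∀ b, ¬ Cov F P b x y) :
    ∃ (a : A) (u v : V a), (F a).Adj u v ∧
      Good F Rℵ (P ∪ {((⟨a, u⟩ : Σ a, V a), x), ((⟨a, v⟩ : Σ a, V a), y)}) := by
  have hlt : #(ActiveA V P) < #A := by
    rw [hA]; exact lt_of_le_of_lt (mk_activeA_le P) hP
  have hex : ∃ a, a ∉ ActiveA V P := by
    by_contra h
    push_neg at h
    have : ActiveA V P = Set.univ := eq_univ_of_forall h
    rw [this, mk_univ] at hlt
    exact lt_irrefl _ hlt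
  obtain ⟨a, ha⟩ := hex
  have hnodom : ∀ (w : V a) (x₁ : X), ((⟨a, w⟩ : Σ a, V a), x₁) ∉ P :=
    fun w x₁ h => ha ⟨w, x₁, h⟩
  obtain ⟨u, v, huv⟩ := exists_adj_of_ne a (hne a)
  have hxy : x ≠ y := hadj.ne
  have huvne : u ≠ v := huv.ne
  set A1 : Atom V X := ((⟨a, u⟩ : Σ a, V a), x) with hA1
  set A2 : Atom V X := ((⟨a, v⟩ : Σ a, V a), y) with hA2
  have hmem : ∀ p : Atom V X, p ∈ P ∪ {A1, A2} ↔ p ∈ P ∨ p = A1 ∨ p = A2 := by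
    intro p
    rw [Set.mem_union, Set.mem_insert_iff, Set.mem_singleton_iff]
  have hcov' : ∀ (c : A) (x₁ y₁ : X), Cov F (P ∪ {A1, A2}) c x₁ y₁ →
      Cov F P c x₁ y₁ ∨ (c = a ∧ ((x₁ = x ∧ y₁ = y) ∨ (x₁ = y ∧ y₁ = x))) := by
    rintro c x₁ y₁ ⟨u₁, v₁, h1, h2, hadj₁⟩
    rw [hmem] at h1 h2
    rcases h1 with h1 | h1 | h1 <;> rcases h2 with h2 | h2 | h2
    · exact Or.inl ⟨u₁, v₁, h1, h2, hadj₁⟩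
    · -- h2 = A1 : c = a, v₁ = u ; h1 old a-atom impossible
      obtain ⟨hk, -⟩ := Prod.ext_iff.mp h2
      obtain ⟨rfl, hw⟩ := key_cases hk
      exact (hnodom u₁ x₁ h1).elim
    · obtain ⟨hk, -⟩ := Prod.ext_iff.mp h2
      obtain ⟨rfl, hw⟩ := key_cases hk
      exact (hnodom u₁ x₁ h1).elim
    · obtain ⟨hk, -⟩ := Prod.ext_iff.mp h1
      obtain ⟨rfl, hw⟩ := key_cases hk
      exact (hnodom v₁ y₁ h2).elim
    · -- both A1
      obtain ⟨hk, -⟩ := Prod.ext_iff.mp h1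
      obtain ⟨rfl, hw⟩ := key_cases hk
      obtain rfl := eq_of_heq hw
      obtain ⟨hk', -⟩ := Prod.ext_iff.mp h2
      obtain ⟨-, hw'⟩ := key_cases hk'
      obtain rfl := eq_of_heq hw'
      exact absurd rfl hadj₁.ne
    · -- h1 = A1, h2 = A2
      obtain ⟨hk, hx1⟩ := Prod.ext_iff.mp h1
      obtain ⟨rfl, -⟩ := key_cases hk
      obtain ⟨-, hy1⟩ := Prod.ext_iff.mp h2
      exact Or.inr ⟨rfl, Or.inl ⟨hx1, hy1⟩⟩
    · obtain ⟨hk, -⟩ := Prod.ext_iff.mp h1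
      obtain ⟨rfl, hw⟩ := key_cases hk
      exact (hnodom v₁ y₁ h2).elim
    · -- h1 = A2, h2 = A1
      obtain ⟨hk, hx1⟩ := Prod.ext_iff.mp h1
      obtain ⟨rfl, -⟩ := key_cases hk
      obtain ⟨-, hy1⟩ := Prod.ext_iff.mp h2
      exact Or.inr ⟨rfl, Or.inr ⟨hx1, hy1⟩⟩
    · -- both A2
      obtain ⟨hk, -⟩ := Prod.ext_iff.mp h1
      obtain ⟨rfl, hw⟩ := key_cases hk
      obtain rfl := eq_of_heq hw
      obtain ⟨hk', -⟩ := Prod.ext_iff.mp h2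
      obtain ⟨-, hw'⟩ := key_cases hk'
      obtain rfl := eq_of_heq hw'
      exact absurd rfl hadj₁.ne
  refine ⟨a, u, v, huv, ?_, ?_, ?_, ?_⟩
  · -- func
    intro k x₁ x₂ h1 h2
    rw [hmem] at h1 h2
    rcases h1 with h1 | h1 | h1 <;> rcases h2 with h2 | h2 | h2
    · exact hG.func k x₁ x₂ h1 h2
    · obtain ⟨hk, -⟩ := Prod.ext_iff.mp h2
      have hk2 : k = ⟨a, u⟩ := hk
      subst hk2
      exact (hnodom u x₁ h1).elim
    · obtain ⟨hk, -⟩ := Prod.ext_iff.mp h2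
      have hk2 : k = ⟨a, v⟩ := hk
      subst hk2
      exact (hnodom v x₁ h1).elim
    · obtain ⟨hk, -⟩ := Prod.ext_iff.mp h1
      have hk2 : k = ⟨a, u⟩ := hk
      subst hk2
      exact (hnodom u x₂ h2).elim
    · obtain ⟨-, h1x⟩ := Prod.ext_iff.mp h1
      obtain ⟨-, h2x⟩ := Prod.ext_iff.mp h2
      exact h1x.trans h2x.symm
    · -- k = ⟨a,u⟩ = ⟨a,v⟩ : contradiction
      obtain ⟨hk, -⟩ := Prod.ext_iff.mp h1
      obtain ⟨hk', -⟩ := Prod.ext_iff.mp h2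
      have : (⟨a, u⟩ : Σ a, V a) = ⟨a, v⟩ := hk.symm.trans hk'
      obtain ⟨-, hw⟩ := key_cases this.symm
      exact absurd (eq_of_heq hw) huvne.symm
    · obtain ⟨hk, -⟩ := Prod.ext_iff.mp h1
      have hk2 : k = ⟨a, v⟩ := hk
      subst hk2
      exact (hnodom v x₂ h2).elim
    · obtain ⟨hk, -⟩ := Prod.ext_iff.mp h1
      obtain ⟨hk', -⟩ := Prod.ext_iff.mp h2
      have : (⟨a, u⟩ : Σ a, V a) = ⟨a, v⟩ := hk'.symm.trans hk
      obtain ⟨-, hw⟩ := key_cases this.symm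
      exact absurd (eq_of_heq hw) huvne.symm
    · obtain ⟨-, h1x⟩ := Prod.ext_iff.mp h1
      obtain ⟨-, h2x⟩ := Prod.ext_iff.mp h2
      exact h1x.trans h2x.symm
  · -- inj
    intro k k' x₁ h1 h2 hfst
    rw [hmem] at h1 h2
    rcases h1 with h1 | h1 | h1 <;> rcases h2 with h2 | h2 | h2
    · exact hG.inj k k' x₁ h1 h2 hfst
    · obtain ⟨hk, -⟩ := Prod.ext_iff.mp h2
      have hk2 : k' = ⟨a, u⟩ := hk
      obtain ⟨b, w⟩ := k
      rw [hk2] at hfst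
      have hba : b = a := hfst
      subst hba
      exact (hnodom w x₁ h1).elim
    · obtain ⟨hk, -⟩ := Prod.ext_iff.mp h2
      have hk2 : k' = ⟨a, v⟩ := hk
      obtain ⟨b, w⟩ := k
      rw [hk2] at hfst
      have hba : b = a := hfst
      subst hba
      exact (hnodom w x₁ h1).elim
    · obtain ⟨hk, -⟩ := Prod.ext_iff.mp h1
      have hk2 : k = ⟨a, u⟩ := hk
      obtain ⟨b, w⟩ := k'
      rw [hk2] at hfst
      have hba : b = a := hfst.symm
      subst hba
      exact (hnodom w x₁ h2).elim
    · obtain ⟨hk, -⟩ := Prod.ext_iff.mp h1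
      obtain ⟨hk', -⟩ := Prod.ext_iff.mp h2
      exact hk.trans hk'.symm
    · -- h1 = A1, h2 = A2 : x₁ = x and x₁ = y, contradiction
      obtain ⟨-, h1x⟩ := Prod.ext_iff.mp h1
      obtain ⟨-, h2x⟩ := Prod.ext_iff.mp h2
      exact absurd ((h1x.symm.trans h2x : x = y)) hxy
    · obtain ⟨hk, -⟩ := Prod.ext_iff.mp h1
      have hk2 : k = ⟨a, v⟩ := hk
      obtain ⟨b, w⟩ := k'
      rw [hk2] at hfst
      have hba : b = a := hfst.symm
      subst hba
      exact (hnodom w x₁ h2).elim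
    · obtain ⟨-, h1x⟩ := Prod.ext_iff.mp h1
      obtain ⟨-, h2x⟩ := Prod.ext_iff.mp h2
      exact absurd ((h1x.symm.trans h2x : y = x)) hxy.symm
    · obtain ⟨hk, -⟩ := Prod.ext_iff.mp h1
      obtain ⟨hk', -⟩ := Prod.ext_iff.mp h2
      exact hk.trans hk'.symm
  · -- hom
    intro b u' v' x₁ y₁ h1 h2 hadj₁
    rw [hmem] at h1 h2
    rcases h1 with h1 | h1 | h1 <;> rcases h2 with h2 | h2 | h2
    · exact hG.hom b u' v' x₁ y₁ h1 h2 hadj₁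
    · obtain ⟨hk, -⟩ := Prod.ext_iff.mp h2
      obtain ⟨rfl, -⟩ := key_cases hk
      exact (hnodom u' x₁ h1).elim
    · obtain ⟨hk, -⟩ := Prod.ext_iff.mp h2
      obtain ⟨rfl, -⟩ := key_cases hk
      exact (hnodom u' x₁ h1).elim
    · obtain ⟨hk, -⟩ := Prod.ext_iff.mp h1
      obtain ⟨rfl, -⟩ := key_cases hk
      exact (hnodom v' y₁ h2).elim
    · -- both A1
      obtain ⟨hk, -⟩ := Prod.ext_iff.mp h1
      obtain ⟨rfl, hw⟩ := key_cases hk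
      obtain rfl := eq_of_heq hw
      obtain ⟨hk', -⟩ := Prod.ext_iff.mp h2
      obtain ⟨-, hw'⟩ := key_cases hk'
      obtain rfl := eq_of_heq hw'
      exact absurd rfl hadj₁.ne
    · -- A1 A2 : goal Adj x y
      obtain ⟨-, h1x⟩ := Prod.ext_iff.mp h1
      obtain ⟨-, h2x⟩ := Prod.ext_iff.mp h2
      have hx1 : x₁ = x := h1x
      have hy1 : y₁ = y := h2x
      subst hx1; subst hy1
      exact hadj
    · obtain ⟨hk, -⟩ := Prod.ext_iff.mp h1
      obtain ⟨rfl, -⟩ := key_cases hk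
      exact (hnodom v' y₁ h2).elim
    · -- A2 A1 : goal Adj y x
      obtain ⟨-, h1x⟩ := Prod.ext_iff.mp h1
      obtain ⟨-, h2x⟩ := Prod.ext_iff.mp h2
      have hx1 : x₁ = y := h1x
      have hy1 : y₁ = x := h2x
      subst hx1; subst hy1
      exact hadj.symm
    · -- both A2
      obtain ⟨hk, -⟩ := Prod.ext_iff.mp h1
      obtain ⟨rfl, hw⟩ := key_cases hk
      obtain rfl := eq_of_heq hw
      obtain ⟨hk', -⟩ := Prod.ext_iff.mp h2
      obtain ⟨-, hw'⟩ := key_cases hk'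
      obtain rfl := eq_of_heq hw'
      exact absurd rfl hadj₁.ne
  · -- cov
    intro b c x₁ y₁ hb hc
    rcases hcov' b x₁ y₁ hb with hb' | ⟨rfl, hbz⟩
    · rcases hcov' c x₁ y₁ hc with hc' | ⟨rfl, hcz⟩
      · exact hG.cov b c x₁ y₁ hb' hc'
      · rcases hcz with ⟨rfl, rfl⟩ | ⟨rfl, rfl⟩
        · exact absurd hb' (hnc b)
        · exact absurd (cov_symm hb') (hnc b)
    · rcases hcov' c x₁ y₁ hc with hc' | ⟨rfl, hcz⟩
      · rcases hbz with ⟨rfl, rfl⟩ | ⟨rfl, rfl⟩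
        · exact absurd hc' (hnc c)
        · exact absurd (cov_symm hc') (hnc c)
      · rfl

end Extension


section Recursion

variable {A X : Type u} {V : A → Type u}

lemma cov_iUnion {F : ∀ a, SimpleGraph (V a)} {ι : Type u} {Ps : ι → Set (Atom V X)}
    (hdir : ∀ i j, ∃ k, Ps i ⊆ Ps k ∧ Ps j ⊆ Ps k) {b : A} {x y : X}
    (h : Cov F (⋃ i, Ps i) b x y) : ∃ i, Cov F (Ps i) b x y := by
  obtain ⟨u, v, h1, h2, hadj⟩ := h
  rw [Set.mem_iUnion] at h1 h2
  obtain ⟨i, h1⟩ := h1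
  obtain ⟨j, h2⟩ := h2
  obtain ⟨k, hik, hjk⟩ := hdir i j
  exact ⟨k, u, v, hik h1, hjk h2, hadj⟩

lemma good_directed {F : ∀ a, SimpleGraph (V a)} {Rℵ : SimpleGraph X} {ι : Type u}
    (Ps : ι → Set (Atom V X)) (hdir : ∀ i j, ∃ k, Ps i ⊆ Ps k ∧ Ps j ⊆ Ps k)
    (hgood : ∀ i, Good F Rℵ (Ps i)) : Good F Rℵ (⋃ i, Ps i) := by
  refine ⟨?_, ?_, ?_, ?_⟩
  · intro k x x' h1 h2
    rw [Set.mem_iUnion] at h1 h2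
    obtain ⟨i, h1⟩ := h1
    obtain ⟨j, h2⟩ := h2
    obtain ⟨l, hil, hjl⟩ := hdir i j
    exact (hgood l).func k x x' (hil h1) (hjl h2)
  · intro k k' x h1 h2 hfst
    rw [Set.mem_iUnion] at h1 h2
    obtain ⟨i, h1⟩ := h1
    obtain ⟨j, h2⟩ := h2
    obtain ⟨l, hil, hjl⟩ := hdir i j
    exact (hgood l).inj k k' x (hil h1) (hjl h2) hfst
  · intro a u v x y h1 h2 hadj
    rw [Set.mem_iUnion] at h1 h2
    obtain ⟨i, h1⟩ := h1
    obtain ⟨j, h2⟩ := h2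
    obtain ⟨l, hil, hjl⟩ := hdir i j
    exact (hgood l).hom a u v x y (hil h1) (hjl h2) hadj
  · intro b c x y hb hc
    obtain ⟨i, hb⟩ := cov_iUnion hdir hb
    obtain ⟨j, hc⟩ := cov_iUnion hdir hc
    obtain ⟨l, hil, hjl⟩ := hdir i j
    exact (hgood l).cov b c x y (cov_mono hil hb) (cov_mono hjl hc)

variable (V) in
/-- The type indexing the tasks of the transfinite construction. -/
def Tasks (Rℵ : SimpleGraph X) : Type u :=
  (Σ a, V a) ⊕ ((A × X) ⊕ ↥(Rℵ.edgeSet))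

/-- The task `t` has been completed at state `P`. -/
def TaskDone (F : ∀ a, SimpleGraph (V a)) (Rℵ : SimpleGraph X) (P : Set (Atom V X)) :
    Tasks V Rℵ → Prop
  | Sum.inl k => k.2 ∈ Dom V P k.1
  | Sum.inr (Sum.inl ax) => ax.2 ∈ Ran V P ax.1
  | Sum.inr (Sum.inr e) => ∃ x y, (e : Sym2 X) = s(x, y) ∧ ∃ b, Cov F P b x y

lemma taskDone_mono {F : ∀ a, SimpleGraph (V a)} {Rℵ : SimpleGraph X}
    {P Q : Set (Atom V X)} (hPQ : P ⊆ Q) :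
    ∀ t, TaskDone F Rℵ P t → TaskDone F Rℵ Q t := by
  rintro (k | (ax | e)) h
  · obtain ⟨x, hx⟩ := h
    exact ⟨x, hPQ hx⟩
  · obtain ⟨u, hu⟩ := h
    exact ⟨u, hPQ hu⟩
  · obtain ⟨x, y, he, b, hb⟩ := h
    exact ⟨x, y, he, b, cov_mono hPQ hb⟩

lemma mk_tasks {Rℵ : SimpleGraph X} {ℵ : Cardinal.{u}} (hℵ : ℵ₀ ≤ ℵ) (hX : #X = ℵ)
    (hA : #A = ℵ) (hV : ∀ a, #(V a) = ℵ) : #(Tasks V Rℵ) = ℵ := by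
  have h1 : #(Σ a, V a) = ℵ := by
    rw [mk_sigma]
    have he : (Cardinal.sum fun a => #(V a)) = Cardinal.sum fun _ : A => ℵ := by
      congr 1
      funext a
      exact hV a
    rw [he, sum_const', hA, mul_eq_self hℵ]
  have h2 : #(A × X) = ℵ := by
    rw [mk_prod, lift_id, lift_id, hA, hX, mul_eq_self hℵ]
  have h3 : #(↥(Rℵ.edgeSet)) ≤ ℵ := by
    have hs : Function.Surjective (fun p : X × X => s(p.1, p.2)) := fun e =>
      Sym2.ind (fun x y => ⟨(x, y), rfl⟩) e
    calc #(↥(Rℵ.edgeSet)) ≤ #(Sym2 X) := mk_set_le _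
      _ ≤ #(X × X) := mk_le_of_surjective hs
      _ = ℵ := by rw [mk_prod, lift_id, hX, mul_eq_self hℵ]
  rw [Tasks, mk_sum, mk_sum, lift_id, lift_id, lift_id, lift_id, h1, h2,
    add_eq_left hℵ h3, add_eq_left hℵ le_rfl]

/-- The transfinite construction: there is a state in which all tasks are complete. -/
lemma exists_final {F : ∀ a, SimpleGraph (V a)} {Rℵ : SimpleGraph X} {ℵ : Cardinal.{u}}
    (hℵ : ℵ₀ ≤ ℵ) (hX : #X = ℵ) (hR : StarProp ℵ Rℵ) (hA : #A = ℵ)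
    (hV : ∀ a, #(V a) = ℵ)
    (hdom : ∀ (a : A) (D : Set (V a)), IsDominatingSet (F a) D → ℵ ≤ #D)
    (hne : ∀ a, (F a).edgeSet.Nonempty) :
    ∃ P : Set (Atom V X), Good F Rℵ P ∧ (∀ (a : A) (u : V a), u ∈ Dom V P a) ∧
      (∀ (a : A) (x : X), x ∈ Ran V P a) ∧ ∀ x y, Rℵ.Adj x y → ∃ b, Cov F P b x y := by
  classical
  have h2ℵ : (2 : Cardinal.{u}) < ℵ := lt_of_lt_of_le (by exact_mod_cast nat_lt_aleph0 2) hℵ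
  -- the one-step extension
  have hstep : ∀ (t : Tasks V Rℵ) (P : Set (Atom V X)), Good F Rℵ P → #P < ℵ →
      ∃ N : Set (Atom V X), #N ≤ 2 ∧ Good F Rℵ (P ∪ N) ∧ TaskDone F Rℵ (P ∪ N) t := by
    rintro (⟨a, u⟩ | (⟨a, x⟩ | e)) P hG hP
    · by_cases hu : u ∈ Dom V P a
      · refine ⟨∅, by rw [mk_emptyCollection]; exact zero_le, ?_, ?_⟩
        · rwa [Set.union_empty]
        · rw [Set.union_empty]
          exact hu
      · obtain ⟨x, hx⟩ := extend_dom hℵ hR P hG hP a u hu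
        refine ⟨{((⟨a, u⟩ : Σ a, V a), x)}, ?_, hx, ?_⟩
        · rw [mk_singleton]
          exact one_le_two
        · exact ⟨x, Set.mem_union_right _ rfl⟩
    · by_cases hx : x ∈ Ran V P a
      · refine ⟨∅, by rw [mk_emptyCollection]; exact zero_le, ?_, ?_⟩
        · rwa [Set.union_empty]
        · rw [Set.union_empty]
          exact hx
      · obtain ⟨u, hu⟩ := extend_ran hdom P hG hP a x hx
        refine ⟨{((⟨a, u⟩ : Σ a, V a), x)}, ?_, hu, ?_⟩
        · rw [mk_singleton]
          exact one_le_two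
        · exact ⟨u, Set.mem_union_right _ rfl⟩
    · by_cases hc : TaskDone F Rℵ P (Sum.inr (Sum.inr e))
      · refine ⟨∅, by rw [mk_emptyCollection]; exact zero_le, ?_, ?_⟩
        · rwa [Set.union_empty]
        · rw [Set.union_empty]
          exact hc
      · obtain ⟨x, y, hexy, hadj⟩ : ∃ x y, (e : Sym2 X) = s(x, y) ∧ Rℵ.Adj x y := by
          obtain ⟨e', he'⟩ := e
          exact Sym2.ind (f := fun e' => e' ∈ Rℵ.edgeSet → ∃ x y, e' = s(x, y) ∧ Rℵ.Adj x y)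
            (fun x y h => ⟨x, y, rfl, h⟩) e' he'
        have hnc : ∀ b, ¬ Cov F P b x y := fun b hb => hc ⟨x, y, hexy, b, hb⟩
        obtain ⟨a, u, v, huv, hGood⟩ := cover_edge hℵ hA hne P hG hP x y hadj hnc
        refine ⟨{((⟨a, u⟩ : Σ a, V a), x), ((⟨a, v⟩ : Σ a, V a), y)}, ?_, hGood, ?_⟩
        · calc #({((⟨a, u⟩ : Σ a, V a), x), ((⟨a, v⟩ : Σ a, V a), y)} : Set (Atom V X))
              ≤ #({((⟨a, v⟩ : Σ a, V a), y)} : Set (Atom V X)) + 1 := mk_insert_le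
            _ = 2 := by rw [mk_singleton, one_add_one_eq_two]
        · exact ⟨x, y, hexy, a, u, v,
            Set.mem_union_right _ (Set.mem_insert _ _),
            Set.mem_union_right _ (Set.mem_insert_of_mem _ rfl), huv⟩
  -- a well-order on the tasks all whose initial segments are small
  obtain ⟨r, wo, hord⟩ := Cardinal.ord_eq (Tasks V Rℵ)
  haveI := wo
  have hseg : ∀ t : Tasks V Rℵ, #{s // r s t} < ℵ := by
    intro t
    have h1 := Cardinal.card_typein_lt (r := r) t hord
    change #{s // r s t} < _ at h1
    rwa [mk_tasks hℵ hX hA hV] at h1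
  have wf : WellFounded r := wo.toIsWellFounded.wf
  let step : Tasks V Rℵ → Set (Atom V X) → Set (Atom V X) := fun t P =>
    if h : Good F Rℵ P ∧ #P < ℵ then (hstep t P h.1 h.2).choose else ∅
  let g : Tasks V Rℵ → Set (Atom V X) :=
    wf.fix fun t rec => step t (⋃ s : {s // r s t}, rec s.1 s.2)
  let Pre : Tasks V Rℵ → Set (Atom V X) := fun t => ⋃ s : {s // r s t}, g s.1
  let Q : Tasks V Rℵ → Set (Atom V X) := fun t => Pre t ∪ g t
  have hg : ∀ t, g t = step t (Pre t) := fun t => wf.fix_eq _ t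
  have hstep_small : ∀ t P, #(step t P) ≤ 2 := by
    intro t P
    dsimp only [step]
    split
    · next h => exact (hstep t P h.1 h.2).choose_spec.1
    · rw [mk_emptyCollection]
      exact zero_le
  have hg_small : ∀ t, #(g t) ≤ 2 := fun t => by rw [hg t]; exact hstep_small _ _
  have hPre_small : ∀ t, #(Pre t) < ℵ := by
    intro t
    have h1 : #(Pre t) ≤ Cardinal.sum fun s : {s // r s t} => #(g s.1) :=
      mk_iUnion_le_sum_mk
    have h2 : (Cardinal.sum fun s : {s // r s t} => #(g s.1)) ≤
        Cardinal.sum fun _ : {s // r s t} => (2 : Cardinal) :=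
      Cardinal.sum_le_sum _ _ fun s => hg_small s.1
    rw [sum_const'] at h2
    exact lt_of_le_of_lt (h1.trans h2) (mul_lt_of_lt hℵ (hseg t) h2ℵ)
  have hQPre : ∀ s t, r s t → Q s ⊆ Pre t := by
    intro s t hrst
    apply Set.union_subset
    · refine Set.iUnion_subset fun s' => ?_
      intro p hp
      exact Set.mem_iUnion.mpr ⟨⟨s'.1, _root_.trans s'.2 hrst⟩, hp⟩
    · intro p hp
      exact Set.mem_iUnion.mpr ⟨⟨s, hrst⟩, hp⟩
  have hQmono : ∀ s t, r s t → Q s ⊆ Q t := fun s t h =>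
    (hQPre s t h).trans Set.subset_union_left
  have hPre_eq : ∀ t, Pre t = ⋃ s : {s // r s t}, Q s.1 := by
    intro t
    apply Set.Subset.antisymm
    · exact Set.iUnion_mono fun s => Set.subset_union_right
    · exact Set.iUnion_subset fun s => hQPre s.1 t s.2
  have hQboth : ∀ t, Good F Rℵ (Q t) ∧ TaskDone F Rℵ (Q t) t := by
    intro t
    induction t using WellFounded.induction wf with
    | _ t IH =>
    have hdir : ∀ i j : {s // r s t}, ∃ k : {s // r s t}, Q i.1 ⊆ Q k.1 ∧ Q j.1 ⊆ Q k.1 := by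
      intro i j
      rcases trichotomous (r := r) i.1 j.1 with h | h | h
      · exact ⟨j, hQmono _ _ h, subset_rfl⟩
      · exact ⟨j, h ▸ subset_rfl, subset_rfl⟩
      · exact ⟨i, subset_rfl, hQmono _ _ h⟩
    have hPreGood : Good F Rℵ (Pre t) := by
      rw [hPre_eq t]
      exact good_directed _ hdir fun s => (IH s.1 s.2).1
    have hcond : Good F Rℵ (Pre t) ∧ #(Pre t) < ℵ := ⟨hPreGood, hPre_small t⟩
    have hstep_eq : step t (Pre t) = (hstep t (Pre t) hcond.1 hcond.2).choose := dif_pos hcond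
    have hspec := (hstep t (Pre t) hcond.1 hcond.2).choose_spec
    have hQt : Q t = Pre t ∪ (hstep t (Pre t) hcond.1 hcond.2).choose := by
      show Pre t ∪ g t = _
      rw [hg t, hstep_eq]
    rw [hQt]
    exact ⟨hspec.2.1, hspec.2.2⟩
  let Pinf : Set (Atom V X) := ⋃ t, Q t
  have hdir' : ∀ i j : Tasks V Rℵ, ∃ k, Q i ⊆ Q k ∧ Q j ⊆ Q k := by
    intro i j
    rcases trichotomous (r := r) i j with h | h | h
    · exact ⟨j, hQmono _ _ h, subset_rfl⟩
    · exact ⟨j, h ▸ subset_rfl, subset_rfl⟩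
    · exact ⟨i, subset_rfl, hQmono _ _ h⟩
  have hPinfGood : Good F Rℵ Pinf := good_directed Q hdir' fun t => (hQboth t).1
  have hsub : ∀ t, Q t ⊆ Pinf := fun t => Set.subset_iUnion Q t
  refine ⟨Pinf, hPinfGood, ?_, ?_, ?_⟩
  · intro a u
    have h := (hQboth (Sum.inl ⟨a, u⟩)).2
    obtain ⟨x, hx⟩ := h
    exact ⟨x, hsub _ hx⟩
  · intro a x
    have h := (hQboth (Sum.inr (Sum.inl (a, x)))).2
    obtain ⟨u, hu⟩ := h
    exact ⟨u, hsub _ hu⟩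
  · intro x y hadj
    have h := (hQboth (Sum.inr (Sum.inr ⟨s(x, y), Rℵ.mem_edgeSet.mpr hadj⟩))).2
    obtain ⟨x', y', heq, b, hb⟩ := h
    rcases Sym2.eq_iff.mp heq with ⟨rfl, rfl⟩ | ⟨rfl, rfl⟩
    · exact ⟨b, cov_mono (hsub _) hb⟩
    · exact ⟨b, cov_symm (cov_mono (hsub _) hb)⟩

end Recursion

end Stmt9

/-- assume GCH. Let `Rℵ` be a graph of infinite order `ℵ` satisfying
property `⋆_ℵ` (an `ℵ`-Rado graph) and let `𝓕` be a family of (non-empty) graphs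
of order `ℵ` with `|𝓕| = ℵ`. Then `FP(𝓕, Rℵ)` has a solution iff the domination
number of every graph of `𝓕` equals `ℵ` (no dominating set of cardinality `< ℵ`). -/
theorem stmt_9
    (gch : ∀ c : Cardinal.{u}, Cardinal.aleph0 ≤ c → ¬∃ d : Cardinal.{u}, c < d ∧ d < 2 ^ c)
    (ℵ : Cardinal.{u}) (hℵ : Cardinal.aleph0 ≤ ℵ)
    {X : Type u} (hX : Cardinal.mk X = ℵ)
    (Rℵ : SimpleGraph X) (hR : StarProp ℵ Rℵ)
    {A : Type u} (hA : Cardinal.mk A = ℵ)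
    (V : A → Type u) (hV : ∀ a, Cardinal.mk (V a) = ℵ)
    (F : ∀ a, SimpleGraph (V a)) (hne : ∀ a, (F a).edgeSet.Nonempty) :
    (∃ G : A → SimpleGraph X, IsFactorization Rℵ G ∧ ∀ a, Nonempty (F a ≃g G a)) ↔
      ∀ a (D : Set (V a)), IsDominatingSet (F a) D → ℵ ≤ Cardinal.mk ↥D := by
  classical
  constructor
  · rintro ⟨G, ⟨hle, -⟩, hiso⟩ a D hD
    exact Stmt9.dom_large hℵ hR (hle a) (hiso a).some hD
  · intro hdom
    obtain ⟨P, hGood, h1, h2, h3⟩ := Stmt9.exists_final hℵ hX hR hA hV hdom hne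
    set Φ : ∀ a, V a → X := fun a u => (h1 a u).choose with hΦdef
    have hΦ : ∀ (a : A) (u : V a), ((⟨a, u⟩ : Σ a, V a), Φ a u) ∈ P :=
      fun a u => (h1 a u).choose_spec
    have hbij : ∀ a, Function.Bijective (Φ a) := by
      intro a
      constructor
      · intro u u' he
        have h := hGood.inj ⟨a, u⟩ ⟨a, u'⟩ (Φ a u) (hΦ a u) (by rw [he]; exact hΦ a u') rfl
        simpa using h
      · intro x
        obtain ⟨u, hu⟩ := h2 a x
        exact ⟨u, hGood.func ⟨a, u⟩ _ _ (hΦ a u) hu⟩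
    set e : ∀ a, V a ≃ X := fun a => Equiv.ofBijective (Φ a) (hbij a) with hedef
    have hkey : ∀ (a : A) (x : X), ((⟨a, (e a).symm x⟩ : Σ a, V a), x) ∈ P := by
      intro a x
      have h := hΦ a ((e a).symm x)
      have h' : Φ a ((e a).symm x) = x := (e a).apply_symm_apply x
      rwa [h'] at h
    set G : A → SimpleGraph X := fun a => (F a).comap ((e a).symm : X → V a) with hGdef
    have hCov : ∀ (b : A) (x y : X), Stmt9.Cov F P b x y ↔ (G b).Adj x y := by
      intro b x y
      constructor
      · rintro ⟨u, v, hu, hv, hadj⟩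
        have hux : u = (e b).symm x := by
          have h := hGood.inj ⟨b, u⟩ ⟨b, (e b).symm x⟩ x hu (hkey b x) rfl
          simpa using h
        have hvy : v = (e b).symm y := by
          have h := hGood.inj ⟨b, v⟩ ⟨b, (e b).symm y⟩ y hv (hkey b y) rfl
          simpa using h
        subst hux
        subst hvy
        exact hadj
      · intro h
        exact ⟨(e b).symm x, (e b).symm y, hkey b x, hkey b y, h⟩
    refine ⟨G, ⟨?_, ?_⟩, ?_⟩
    · intro a x y hxy
      exact hGood.hom a _ _ x y (hkey a x) (hkey a y) hxy
    · intro ed hed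
      obtain ⟨x, y, rfl, hadj⟩ : ∃ x y, ed = s(x, y) ∧ Rℵ.Adj x y := by
        exact Sym2.ind (f := fun ed => ed ∈ Rℵ.edgeSet → ∃ x y, ed = s(x, y) ∧ Rℵ.Adj x y)
          (fun x y h => ⟨x, y, rfl, h⟩) ed hed
      obtain ⟨b, hb⟩ := h3 x y hadj
      refine ⟨b, (SimpleGraph.mem_edgeSet _).mpr ((hCov b x y).mp hb), ?_⟩
      intro c hc
      exact hGood.cov c b x y ((hCov c x y).mpr ((SimpleGraph.mem_edgeSet _).mp hc)) hb
    · intro a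
      refine ⟨⟨e a, ?_⟩⟩
      intro u v
      show (G a).Adj (e a u) (e a v) ↔ (F a).Adj u v
      rw [hGdef]
      simp only [SimpleGraph.comap_adj, Equiv.symm_apply_apply]
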